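/- Let φ : ℝ → ℝ be defined by φ(ξ) = 0 for ξ < 0, φ(ξ) = −√ξ for ξ ∈ [0,1], and φ(ξ) = −1 for ξ > 1, and define ρ : ℓ² → ℓ² by ρ(α)ₙ = (1/n)·φ(αₙ). Then ρ is well-defined (maps ℓ² into ℓ²), satisfies the dissipativity condition ⟨α − β, ρ(α) − ρ(β)⟩ ≤ 0 for all α, β ∈ ℓ², and is uniformly bounded with ‖ρ(α)‖² ≤ Σ_{n=1}^∞ 1/n² for all α ∈ ℓ², but ρ is not Lipschitz continuous: there is no finite M with ‖ρ(α) − ρ(β)‖ ≤ M‖α − β‖ for all α, β ∈ ℓ². -/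

import Mathlib

noncomputable def phi (ξ : ℝ) : ℝ :=
  if ξ < 0 then 0 else if ξ ≤ 1 then -Real.sqrt ξ else -1

/-- The nonlinearity ρ on ℓ², acting coordinatewise: ρ(α)ₙ = (1/n)·φ(αₙ)
(coordinates indexed from 1, here `n : ℕ` corresponds to coordinate `n+1`). -/
noncomputable def rho (α : ℕ → ℝ) : ℕ → ℝ :=
  fun n => (1 / (n + 1 : ℝ)) * phi (α n)

lemma phi_nonpos (ξ : ℝ) : phi ξ ≤ 0 := by
  unfold phi
  split_ifs with h1 h2
  · exact le_rfl
  · linarith [Real.sqrt_nonneg ξ]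
  · norm_num

lemma phi_ge (ξ : ℝ) : -1 ≤ phi ξ := by
  unfold phi
  split_ifs with h1 h2
  · norm_num
  · have : Real.sqrt ξ ≤ 1 := Real.sqrt_le_one.2 h2
    linarith
  · exact le_rfl

lemma phi_anti : Antitone phi := by
  intro a b hab
  unfold phi
  split_ifs with hb1 hb2 ha1 ha2 ha1 ha2
  all_goals
    first
    | linarith [Real.sqrt_nonneg a, Real.sqrt_nonneg b]
    | exact neg_le_neg (Real.sqrt_le_sqrt hab)
    | (have hsa : Real.sqrt a ≤ 1 := Real.sqrt_le_one.2 (by linarith); linarith)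
    | (have hsb : Real.sqrt b ≤ 1 := Real.sqrt_le_one.2 (by linarith); linarith)

lemma summable_inv_sq : Summable (fun n : ℕ => (1 : ℝ) / (n + 1) ^ 2) := by
  have h : Summable (fun n : ℕ => 1 / (n : ℝ) ^ 2) :=
    Real.summable_one_div_nat_pow.2 one_lt_two
  have h2 := (summable_nat_add_iff (f := fun n : ℕ => 1 / (n : ℝ) ^ 2) 1).2 h
  refine h2.congr fun n => ?_
  push_cast
  ring

lemma rho_abs_le (α : ℕ → ℝ) (n : ℕ) : |rho α n| ≤ 1 / (n + 1 : ℝ) := by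
  have h1 : (0:ℝ) < (n:ℝ) + 1 := by positivity
  have h2 : |phi (α n)| ≤ 1 := by
    rw [abs_le]; exact ⟨phi_ge _, (phi_nonpos _).trans zero_le_one⟩
  calc |rho α n| = |1 / ((n:ℝ) + 1)| * |phi (α n)| := by rw [rho, abs_mul]
    _ ≤ |1 / ((n:ℝ) + 1)| * 1 := by
        exact mul_le_mul_of_nonneg_left h2 (abs_nonneg _)
    _ = 1 / ((n:ℝ) + 1) := by rw [mul_one, abs_of_pos (by positivity)]

lemma rho_sq_summable (α : ℕ → ℝ) : Summable (fun n : ℕ => (rho α n) ^ 2) := by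
  refine Summable.of_nonneg_of_le (fun n => sq_nonneg _) (fun n => ?_) summable_inv_sq
  have := rho_abs_le α n
  have h1 : (0:ℝ) < (n:ℝ) + 1 := by positivity
  calc (rho α n) ^ 2 = |rho α n| ^ 2 := (sq_abs _).symm
    _ ≤ (1 / ((n:ℝ) + 1)) ^ 2 := by
        exact pow_le_pow_left₀ (abs_nonneg _) this 2
    _ = 1 / ((n:ℝ) + 1) ^ 2 := by rw [div_pow, one_pow]

theorem stmt_18 :
    (∀ α : ℕ → ℝ, Memℓp α 2 → Memℓp (rho α) 2) ∧
    (∀ α β : ℕ → ℝ, Memℓp α 2 → Memℓp β 2 →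
      (∑' n : ℕ, (α n - β n) * (rho α n - rho β n)) ≤ 0) ∧
    (∀ α : ℕ → ℝ, (∑' n : ℕ, (rho α n) ^ 2) ≤ ∑' n : ℕ, (1 : ℝ) / (n + 1) ^ 2) ∧
    ¬ ∃ M : ℝ, ∀ α β : ℕ → ℝ, Memℓp α 2 → Memℓp β 2 →
        Real.sqrt (∑' n : ℕ, (rho α n - rho β n) ^ 2) ≤
          M * Real.sqrt (∑' n : ℕ, (α n - β n) ^ 2) := by
  refine ⟨?_, ?_, ?_, ?_⟩
  · -- well-defined
    intro α _
    apply memℓp_gen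
    refine (rho_sq_summable α).congr fun n => ?_
    have h2 : ((2:ENNReal).toReal) = ((2:ℕ):ℝ) := by norm_num
    rw [h2, Real.norm_eq_abs, Real.rpow_natCast, sq_abs]
  · -- dissipative
    intro α β _ _
    apply tsum_nonpos
    intro n
    have h1 : (0:ℝ) ≤ 1 / ((n:ℝ) + 1) := by positivity
    have key : (α n - β n) * (phi (α n) - phi (β n)) ≤ 0 := by
      rcases le_total (α n) (β n) with h | h
      · exact mul_nonpos_of_nonpos_of_nonneg (by linarith) (by linarith [phi_anti h])
      · exact mul_nonpos_of_nonneg_of_nonpos (by linarith) (by linarith [phi_anti h])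
    have : (α n - β n) * (rho α n - rho β n)
        = (1 / ((n:ℝ) + 1)) * ((α n - β n) * (phi (α n) - phi (β n))) := by
      simp only [rho]; ring
    rw [this]
    exact mul_nonpos_of_nonneg_of_nonpos h1 key
  · -- uniform bound
    intro α
    refine Summable.tsum_le_tsum (fun n => ?_) (rho_sq_summable α) summable_inv_sq
    have := rho_abs_le α n
    calc (rho α n) ^ 2 = |rho α n| ^ 2 := (sq_abs _).symm
      _ ≤ (1 / ((n:ℝ) + 1)) ^ 2 := pow_le_pow_left₀ (abs_nonneg _) this 2
      _ = 1 / ((n:ℝ) + 1) ^ 2 := by rw [div_pow, one_pow]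
  · -- not Lipschitz
    rintro ⟨M, hM⟩
    obtain ⟨m, hm⟩ := exists_nat_gt (M ^ 2)
    set c : ℝ := 1 / ((m : ℝ) + 1) with hc
    have hc0 : 0 < c := by positivity
    have hc1 : c ≤ 1 := by
      rw [hc, div_le_one (by positivity)]
      linarith [Nat.cast_nonneg (α := ℝ) m]
    set a : ℕ → ℝ := fun n => if n = 0 then c else 0 with ha
    have hamem : Memℓp a 2 := by
      apply memℓp_gen
      apply summable_of_ne_finset_zero (s := {0})
      intro n hn
      simp only [Finset.mem_singleton] at hn
      simp [ha, hn]
    have hphi0 : phi 0 = 0 := by simp [phi]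
    have hphic : phi c = -Real.sqrt c := by
      rw [phi, if_neg (not_lt.2 hc0.le), if_pos hc1]
    have hrho0 : ∀ n, rho (0 : ℕ → ℝ) n = 0 := by
      intro n; simp [rho, hphi0]
    have h1 : (∑' n : ℕ, (rho a n - rho 0 n) ^ 2) = c := by
      rw [tsum_eq_single 0]
      · have hra : rho a 0 = -Real.sqrt c := by
          simp [rho, ha, hphic]
        rw [hrho0, hra, sub_zero, neg_sq, Real.sq_sqrt hc0.le]
      · intro n hn
        simp [rho, ha, hn, hrho0, hphi0]
    have h2 : (∑' n : ℕ, (a n - (0:ℕ→ℝ) n) ^ 2) = c ^ 2 := by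
      rw [tsum_eq_single 0]
      · simp [ha]
      · intro n hn
        simp [ha, hn]
    have key := hM a 0 hamem (zero_memℓp)
    rw [h1, h2] at key
    have hsq : Real.sqrt (c ^ 2) = c := Real.sqrt_sq hc0.le
    rw [hsq] at key
    -- key : √c ≤ M * c
    have hs0 : 0 < Real.sqrt c := Real.sqrt_pos.2 hc0
    have hssq : Real.sqrt c ^ 2 = c := Real.sq_sqrt hc0.le
    have hM0 : 0 < M := by nlinarith
    -- square both sides: c ≤ M^2 c^2, so 1 ≤ M^2 c, so m+1 ≤ M^2
    have h3 : c ≤ M ^ 2 * c ^ 2 := by nlinarith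
    have h4 : (1:ℝ) ≤ M ^ 2 * c := by
      calc (1:ℝ) = c / c := (div_self hc0.ne').symm
        _ ≤ M ^ 2 * c ^ 2 / c := by gcongr
        _ = M ^ 2 * c := by field_simp
    have h5 : (m : ℝ) + 1 ≤ M ^ 2 := by
      rw [hc] at h4
      have hm1 : (0:ℝ) < (m:ℝ) + 1 := by positivity
      rw [mul_one_div, le_div_iff₀ hm1, one_mul] at h4
      linarith
    linarith
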